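/- Let S = {s_1, s_2, …, s_k} be a set of k distinct positive integers with s_1 < s_2 < … < s_k. If s_i > s_1 + s_2 + ⋯ + s_{i-1} for every i with 2 ≤ i ≤ k, then CM(S) = k. -/

import Mathlib

/-- The Cookie Monster number of a finite set `S` of jar contents: the least `n`
for which there exist positive move amounts `a_1, …, a_n` such that every `s ∈ S`
is the sum of a subset of the move amounts. -/
noncomputable def CM (S : Finset ℕ) : ℕ :=
  sInf {n : ℕ | ∃ a : Fin n → ℕ, (∀ i, 0 < a i) ∧
    ∀ s ∈ S, ∃ I : Finset (Fin n), ∑ i ∈ I, a i = s}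

lemma sum_biUnion_le' {α β : Type*} [DecidableEq α] [DecidableEq β] (t : Finset α) (I : α → Finset β)
    (f : β → ℕ) : ∑ x ∈ t.biUnion I, f x ≤ ∑ j ∈ t, ∑ x ∈ I j, f x := by
  induction t using Finset.induction with
  | empty => simp
  | insert _ _ h ih =>
    rw [Finset.biUnion_insert, Finset.sum_insert h]
    exact le_trans (Nat.le.intro (Finset.sum_union_inter (f := f))) (Nat.add_le_add_left ih _)

/-- If each jar (beyond the first) contains more cookies than all smaller jars
combined, then the Cookie Monster number equals the number of jars. -/
theorem cm_of_superincreasing (k : ℕ) (hk : 0 < k) (s : Fin k → ℕ)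
    (hmono : StrictMono s) (hpos : ∀ i, 0 < s i)
    (hsup : ∀ i : Fin k, 1 ≤ (i : ℕ) →
      ∑ j ∈ Finset.univ.filter (· < i), s j < s i) :
    CM (Finset.image s Finset.univ) = k := by
  have hsup' : ∀ i : Fin k, ∑ j ∈ Finset.univ.filter (· < i), s j < s i := by
    intro i
    rcases Nat.eq_zero_or_pos (i : ℕ) with h0 | h1
    · have : Finset.univ.filter (· < i) = ∅ := by
        ext j; simp only [Finset.mem_filter, Finset.mem_univ, true_and,
          Finset.notMem_empty, iff_false, Fin.lt_def, h0]
        omega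
      rw [this]; simpa using hpos i
    · exact hsup i h1
  have hmem : k ∈ {n : ℕ | ∃ a : Fin n → ℕ, (∀ i, 0 < a i) ∧
      ∀ x ∈ Finset.image s Finset.univ, ∃ I : Finset (Fin n), ∑ i ∈ I, a i = x} := by
    refine ⟨s, hpos, ?_⟩
    intro x hx
    rcases Finset.mem_image.1 hx with ⟨i, _, rfl⟩
    exact ⟨{i}, by simp⟩
  have hlb : ∀ n ∈ {n : ℕ | ∃ a : Fin n → ℕ, (∀ i, 0 < a i) ∧
      ∀ x ∈ Finset.image s Finset.univ, ∃ I : Finset (Fin n), ∑ i ∈ I, a i = x}, k ≤ n := by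
    rintro n ⟨a, hapos, ha⟩
    have hI : ∀ i : Fin k, ∃ I : Finset (Fin n), ∑ x ∈ I, a x = s i := fun i =>
      ha (s i) (Finset.mem_image_of_mem s (Finset.mem_univ i))
    choose I hIsum using hI
    -- each I i has an element not in the union of earlier I j
    have hnew : ∀ i : Fin k, ∃ x ∈ I i,
        x ∉ (Finset.univ.filter (· < i)).biUnion I := by
      intro i
      by_contra h
      push_neg at h
      have hsub : I i ⊆ (Finset.univ.filter (· < i)).biUnion I := h
      have h1 : s i ≤ ∑ x ∈ (Finset.univ.filter (· < i)).biUnion I, a x := by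
        rw [← hIsum i]
        exact Finset.sum_le_sum_of_subset hsub
      have h2 : ∑ x ∈ (Finset.univ.filter (· < i)).biUnion I, a x ≤
          ∑ j ∈ Finset.univ.filter (· < i), s j := by
        calc ∑ x ∈ (Finset.univ.filter (· < i)).biUnion I, a x
            ≤ ∑ j ∈ Finset.univ.filter (· < i), ∑ x ∈ I j, a x := sum_biUnion_le' _ _ _
          _ = ∑ j ∈ Finset.univ.filter (· < i), s j := by
              exact Finset.sum_congr rfl fun j _ => hIsum j
      exact absurd (h1.trans h2) (not_le.2 (hsup' i))
    choose x hxI hxU using hnew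
    have hxinj : Function.Injective x := by
      intro i j hij
      by_contra hne
      wlog hlt : i < j generalizing i j
      · exact this hij.symm (Ne.symm hne) (lt_of_le_of_ne (not_lt.1 hlt) (Ne.symm hne))
      apply hxU j
      rw [Finset.mem_biUnion]
      exact ⟨i, Finset.mem_filter.2 ⟨Finset.mem_univ i, hlt⟩, hij ▸ hxI i⟩
    calc k = Fintype.card (Fin k) := (Fintype.card_fin k).symm
      _ ≤ Fintype.card (Fin n) := Fintype.card_le_of_injective x hxinj
      _ = n := Fintype.card_fin n
  unfold CM
  exact le_antisymm (Nat.sInf_le hmem) (le_csInf ⟨k, hmem⟩ hlb)
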